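/- Let a, b, c be pairwise distinct real numbers and let β ≠ 0 and γ ≠ 0. At the point μ* = (0, β/(2(a−b)), γ/(2(a−c))), the matrix F_{0,β,γ}(μ*) has rank exactly 1, and there exist nonzero vectors q ∈ ℝ² and k ∈ ℝ³ with q · F_{0,β,γ}(μ*) = 0, F_{0,β,γ}(μ*) · k = 0, and q · M(v) · k = 0 for every v ∈ ℝ³, where M(v) is the 2×3 matrix with first row (2a v₁, 2b v₂, 2c v₃) and second row (v₁, v₂, v₃). (I.e., the map μ ↦ F_{0,β,γ}(μ) fails to be transverse to the rank ≤ 1 variety at μ*.) -/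

import Mathlib

open Matrix

/-- A matrix whose rows span the line through a nonzero vector has rank one. -/
lemma rank_eq_one_of_rows (A : Matrix (Fin 2) (Fin 3) ℝ) (u : Fin 3 → ℝ) (t : ℝ)
    (h0 : A 0 = t • u) (h1 : A 1 = u) (hu : u ≠ 0) : A.rank = 1 := by
  rw [Matrix.rank_eq_finrank_span_row]
  have hspan : Submodule.span ℝ (Set.range A) = Submodule.span ℝ {u} := by
    apply le_antisymm
    · rw [Submodule.span_le]
      rintro x ⟨i, rfl⟩
      fin_cases i
      · show A 0 ∈ _
        rw [h0]
        exact Submodule.smul_mem _ _ (Submodule.mem_span_singleton_self u)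
      · show A 1 ∈ _
        rw [h1]
        exact Submodule.mem_span_singleton_self u
    · rw [Submodule.span_le, Set.singleton_subset_iff]
      exact Submodule.subset_span ⟨1, h1⟩
  rw [show Set.range A.row = Set.range A from rfl, hspan, finrank_span_singleton hu]

/-- For pairwise distinct `a b c` and `β γ` nonzero, at the point
`μ* = (0, β/(2(a−b)), γ/(2(a−c)))` the matrix `F_{0,β,γ}(μ*)` has rank exactly 1
and transversality to the rank-≤1 variety fails: there are nonzero `q`, `k` in
the left kernel and kernel respectively with `q ⬝ M(v) ⬝ k = 0` for all `v`. -/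
theorem stmt_9 (a b c β γ : ℝ) (hab : a ≠ b) (hbc : b ≠ c) (hac : a ≠ c)
    (hβ : β ≠ 0) (hγ : γ ≠ 0) :
    (!![2*a*(0:ℝ), 2*b*(β / (2*(a-b))) + β, 2*c*(γ / (2*(a-c))) + γ;
        (0:ℝ), β / (2*(a-b)), γ / (2*(a-c))] :
      Matrix (Fin 2) (Fin 3) ℝ).rank = 1 ∧
    ∃ (q : Fin 2 → ℝ) (k : Fin 3 → ℝ), q ≠ 0 ∧ k ≠ 0 ∧
      q ᵥ* (!![2*a*(0:ℝ), 2*b*(β / (2*(a-b))) + β, 2*c*(γ / (2*(a-c))) + γ;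
          (0:ℝ), β / (2*(a-b)), γ / (2*(a-c))] : Matrix (Fin 2) (Fin 3) ℝ) = 0 ∧
      (!![2*a*(0:ℝ), 2*b*(β / (2*(a-b))) + β, 2*c*(γ / (2*(a-c))) + γ;
          (0:ℝ), β / (2*(a-b)), γ / (2*(a-c))] : Matrix (Fin 2) (Fin 3) ℝ) *ᵥ k = 0 ∧
      ∀ v : Fin 3 → ℝ,
        (q ᵥ* (!![2*a*(v 0), 2*b*(v 1), 2*c*(v 2); v 0, v 1, v 2] :
          Matrix (Fin 2) (Fin 3) ℝ)) ⬝ᵥ k = 0 := by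
  have hab' : a - b ≠ 0 := sub_ne_zero.mpr hab
  have hac' : a - c ≠ 0 := sub_ne_zero.mpr hac
  -- key algebraic identities: first row = 2a • second row
  have e1 : 2*b*(β / (2*(a-b))) + β = 2*a * (β / (2*(a-b))) := by
    field_simp; ring
  have e2 : 2*c*(γ / (2*(a-c))) + γ = 2*a * (γ / (2*(a-c))) := by
    field_simp; ring
  constructor
  · apply rank_eq_one_of_rows _ ![0, β / (2*(a-b)), γ / (2*(a-c))] (2*a)
    · funext j
      fin_cases j <;> simp [e1, e2] <;> ring
    · funext j
      fin_cases j <;> simp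
    · intro h
      have := congrFun h 1
      simp at this
      rcases this with h' | h' <;> [exact hβ h'; exact hab' h']
  · refine ⟨![1, -(2*a)], ![1, 0, 0], ?_, ?_, ?_, ?_, ?_⟩
    · intro h
      have := congrFun h 0
      simp at this
    · intro h
      have := congrFun h 0
      simp at this
    · funext j
      fin_cases j <;>
        simp [Matrix.vecMul, dotProduct, Fin.sum_univ_two, e1, e2] <;> ring
    · funext i
      fin_cases i <;>
        simp [Matrix.mulVec, dotProduct, Fin.sum_univ_three]
    · intro v
      simp [Matrix.vecMul, dotProduct, Fin.sum_univ_two, Fin.sum_univ_three]
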